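/- Let G be a finitely generated free group and H a finitely generated nontrivial almost normal subgroup of G. Then H has finite index in G. -/

import Mathlib

/-- Two subgroups are commensurable if their intersection has finite index in both. -/
def CommensurableSubgroups {G : Type*} [Group G] (H K : Subgroup G) : Prop :=
  (H ⊓ K).relIndex H ≠ 0 ∧ (H ⊓ K).relIndex K ≠ 0

/-- `H` is almost normal in `G` if `H` is commensurable to each of its conjugates. -/
def AlmostNormal {G : Type*} [Group G] (H : Subgroup G) : Prop :=
  ∀ g : G, CommensurableSubgroups H (Subgroup.map (MulAut.conj g).toMonoidHom H)

set_option linter.unusedSectionVars false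
set_option linter.unreachableTactic false
set_option linter.unusedTactic false

open List

namespace ANAux

variable {α : Type*} [DecidableEq α]

/-- the inverse of a single letter -/
def inv1 (a : α × Bool) : α × Bool := (a.1, !a.2)

lemma inv1_inv1 (a : α × Bool) : inv1 (inv1 a) = a := by simp [inv1]

lemma cancel_iff (a b : α × Bool) : (a.1 = b.1 ∧ a.2 = !b.2) ↔ a = inv1 b := by
  rcases a with ⟨a1, a2⟩; rcases b with ⟨b1, b2⟩
  simp [inv1, Prod.ext_iff]

lemma mk_inv1_mul (y : α × Bool) :
    FreeGroup.mk [inv1 y] * FreeGroup.mk [y] = 1 := by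
  have : FreeGroup.mk [inv1 y] = (FreeGroup.mk [y])⁻¹ := by
    rw [FreeGroup.inv_mk]
    simp [FreeGroup.invRev, inv1]
  rw [this, inv_mul_cancel]

lemma mk_inv1_eq_inv (y : α × Bool) :
    FreeGroup.mk [inv1 y] = (FreeGroup.mk [y])⁻¹ := by
  rw [FreeGroup.inv_mk]
  simp [FreeGroup.invRev, inv1]

lemma reduce_cons_nil (x : α × Bool) {L : List (α × Bool)} (h : FreeGroup.reduce L = []) :
    FreeGroup.reduce (x :: L) = [x] := by
  rw [FreeGroup.reduce.cons, h]

lemma reduce_cons_pos {L t : List (α × Bool)} {y : α × Bool} (x : α × Bool)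
    (h : FreeGroup.reduce L = y :: t) (hc : x.1 = y.1 ∧ x.2 = !y.2) :
    FreeGroup.reduce (x :: L) = t := by
  rw [FreeGroup.reduce.cons, h]
  show (if x.1 = y.1 ∧ x.2 = !y.2 then t else x :: y :: t) = t
  rw [if_pos hc]

lemma reduce_cons_neg {L t : List (α × Bool)} {y : α × Bool} (x : α × Bool)
    (h : FreeGroup.reduce L = y :: t) (hc : ¬(x.1 = y.1 ∧ x.2 = !y.2)) :
    FreeGroup.reduce (x :: L) = x :: y :: t := by
  rw [FreeGroup.reduce.cons, h]
  show (if x.1 = y.1 ∧ x.2 = !y.2 then t else x :: y :: t) = x :: y :: t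
  rw [if_neg hc]

/-- Every prefix of the reduction of `L` is equivalent (in the free group)
to a prefix of `L`. -/
theorem prefix_reduce :
    ∀ (L p : List (α × Bool)), p <+: FreeGroup.reduce L →
      ∃ q, q <+: L ∧ FreeGroup.mk p = FreeGroup.mk q := by
  intro L
  induction L with
  | nil =>
    intro p hp
    rw [FreeGroup.reduce_nil] at hp
    exact ⟨p, hp, rfl⟩
  | cons x L ih =>
    intro p hp
    rcases hL : FreeGroup.reduce L with _ | ⟨y, t⟩
    · rw [reduce_cons_nil x hL] at hp
      rcases p with _ | ⟨z, p⟩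
      · exact ⟨[], nil_prefix, rfl⟩
      · rcases hp with ⟨s, hs⟩
        simp only [cons_append] at hs
        injection hs with h1 h2
        rcases List.append_eq_nil_iff.mp h2 with ⟨rfl, rfl⟩
        exact ⟨[x], ⟨L, rfl⟩, by rw [h1]⟩
    · by_cases hc : x.1 = y.1 ∧ x.2 = !y.2
      · rw [reduce_cons_pos x hL hc] at hp
        have h2 : (y :: p) <+: FreeGroup.reduce L := by
          rw [hL]; exact List.cons_prefix_cons.mpr ⟨rfl, hp⟩
        obtain ⟨q, hq, he⟩ := ih (y :: p) h2
        refine ⟨x :: q, List.cons_prefix_cons.mpr ⟨rfl, hq⟩, ?_⟩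
        have hx : x = inv1 y := (cancel_iff x y).mp hc
        have e1 : FreeGroup.mk (y :: p) = FreeGroup.mk [y] * FreeGroup.mk p := by
          rw [FreeGroup.mul_mk]; rfl
        have e2 : FreeGroup.mk (x :: q) = FreeGroup.mk [x] * FreeGroup.mk q := by
          rw [FreeGroup.mul_mk]; rfl
        rw [e2, ← he, e1, ← mul_assoc, hx, mk_inv1_mul, one_mul]
      · rw [reduce_cons_neg x hL hc] at hp
        rcases p with _ | ⟨z, p⟩
        · exact ⟨[], nil_prefix, rfl⟩
        · obtain ⟨rfl, hp'⟩ := List.cons_prefix_cons.mp hp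
          have h2 : p <+: FreeGroup.reduce L := by rw [hL]; exact hp'
          obtain ⟨q, hq, he⟩ := ih p h2
          refine ⟨z :: q, List.cons_prefix_cons.mpr ⟨rfl, hq⟩, ?_⟩
          have e1 : FreeGroup.mk (z :: p) = FreeGroup.mk [z] * FreeGroup.mk p := by
            rw [FreeGroup.mul_mk]; rfl
          have e2 : FreeGroup.mk (z :: q) = FreeGroup.mk [z] * FreeGroup.mk q := by
            rw [FreeGroup.mul_mk]; rfl
          rw [e1, e2, he]

/-- If `x :: A` is reduced then so is `A`. -/
theorem reduced_of_reduced_cons {x : α × Bool} {A : List (α × Bool)}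
    (h : FreeGroup.reduce (x :: A) = x :: A) : FreeGroup.reduce A = A := by
  have hlen : (FreeGroup.reduce A).length ≤ A.length :=
    (FreeGroup.Red.sublist FreeGroup.reduce.red).length_le
  rcases hA : FreeGroup.reduce A with _ | ⟨y, t⟩
  · rw [reduce_cons_nil x hA] at h
    injection h with h1 h2
    all_goals exact h2
  · rw [hA] at hlen
    by_cases hc : x.1 = y.1 ∧ x.2 = !y.2
    · rw [reduce_cons_pos x hA hc] at h
      exfalso
      have hlh := congrArg List.length h
      simp only [List.length_cons] at hlh hlen
      omega
    · rw [reduce_cons_neg x hA hc] at h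
      injection h with h1 h2
      all_goals exact h2

/-- In a reduced word, adjacent letters do not cancel. -/
theorem no_cancel_of_reduced_cons_cons {x z : α × Bool} {A : List (α × Bool)}
    (h : FreeGroup.reduce (x :: z :: A) = x :: z :: A) :
    ¬(x.1 = z.1 ∧ x.2 = !z.2) := by
  intro hc
  have hA : FreeGroup.reduce (z :: A) = z :: A := reduced_of_reduced_cons h
  rw [reduce_cons_pos x hA hc] at h
  have := congrArg List.length h
  simp at this
  omega

/-- Concatenating reduced words with no cancellation at the junction is reduced. -/
theorem reduce_append (A B : List (α × Bool)) (hA : FreeGroup.reduce A = A)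
    (hB : FreeGroup.reduce B = B)
    (hj : ∀ a b, A.getLast? = some a → B.head? = some b → ¬(a.1 = b.1 ∧ a.2 = !b.2)) :
    FreeGroup.reduce (A ++ B) = A ++ B := by
  induction A with
  | nil => simpa using hB
  | cons x A' ihA =>
    have hA' : FreeGroup.reduce A' = A' := reduced_of_reduced_cons hA
    have hj' : ∀ a b, A'.getLast? = some a → B.head? = some b → ¬(a.1 = b.1 ∧ a.2 = !b.2) := by
      intro a b ha hb
      refine hj a b ?_ hb
      rcases A' with _ | ⟨w, A''⟩
      · simp at ha
      · rw [getLast?_cons_cons]; exact ha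
    have hAB : FreeGroup.reduce (A' ++ B) = A' ++ B := ihA hA' hj'
    rcases hAB' : A' ++ B with _ | ⟨z, t⟩
    · rw [cons_append, hAB', reduce_cons_nil x (by rw [hAB'] at hAB; exact hAB)]
    · have hABz : FreeGroup.reduce (A' ++ B) = z :: t := hAB.trans hAB'
      have hnc : ¬(x.1 = z.1 ∧ x.2 = !z.2) := by
        rcases A' with _ | ⟨w, A''⟩
        · simp only [nil_append] at hAB'
          refine hj x z ?_ ?_
          · simp
          · rw [hAB']; rfl
        · have hw : w = z := by
            simp only [cons_append] at hAB'
            injection hAB'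
          subst hw
          exact no_cancel_of_reduced_cons_cons hA
      rw [cons_append, reduce_cons_neg x hABz hnc, ← hAB']


/-- Quasiconvexity: a prefix of the reduced word of a product lies in the
"partial product times short word" set. -/
theorem exists_decomp :
    ∀ (l : List (FreeGroup α)) (p : List (α × Bool)), p <+: (l.prod).toWord →
      ∃ (t : List (FreeGroup α)) (r : List (α × Bool)),
        (∀ x ∈ t, x ∈ l) ∧ (r = [] ∨ ∃ g ∈ l, r <+: g.toWord) ∧
        FreeGroup.mk p = t.prod * FreeGroup.mk r := by
  intro l
  induction l with
  | nil =>
    intro p hp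
    simp only [List.prod_nil, FreeGroup.toWord_one] at hp
    rcases hp with ⟨s, hs⟩
    have : p = [] := by
      have := congrArg List.length hs
      simp at this
      exact this.1
    subst this
    exact ⟨[], [], by simp, Or.inl rfl, by simp [← FreeGroup.one_eq_mk]⟩
  | cons g l ih =>
    intro p hp
    have hprod : (g :: l).prod = FreeGroup.mk (g.toWord ++ (l.prod).toWord) := by
      rw [← FreeGroup.mul_mk, FreeGroup.mk_toWord, FreeGroup.mk_toWord, List.prod_cons]
    rw [hprod, FreeGroup.toWord_mk] at hp
    obtain ⟨q, hq, he⟩ := prefix_reduce _ _ hp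
    by_cases hlen : q.length ≤ g.toWord.length
    · have hqg : q <+: g.toWord :=
        List.prefix_of_prefix_length_le hq (List.prefix_append _ _) hlen
      exact ⟨[], q, by simp, Or.inr ⟨g, List.mem_cons_self, hqg⟩, by rw [he]; simp⟩
    · have hgq : g.toWord <+: q :=
        List.prefix_of_prefix_length_le (List.prefix_append _ _) hq (by omega)
      obtain ⟨q', rfl⟩ := hgq
      have hq' : q' <+: (l.prod).toWord :=
        (List.prefix_append_right_inj g.toWord).mp hq
      obtain ⟨t', r', ht', hr', he'⟩ := ih q' hq'
      refine ⟨g :: t', r', ?_, ?_, ?_⟩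
      · intro x hx
        rcases List.mem_cons.mp hx with rfl | hx
        · exact List.mem_cons_self
        · exact List.mem_cons_of_mem _ (ht' x hx)
      · rcases hr' with h | ⟨g', hg', hpre⟩
        · exact Or.inl h
        · exact Or.inr ⟨g', List.mem_cons_of_mem _ hg', hpre⟩
      · rw [he, ← FreeGroup.mul_mk, FreeGroup.mk_toWord, he', List.prod_cons, mul_assoc]

/-- Main quasiconvexity consequence: prefixes of reduced words of elements of a
finitely generated subgroup lie in finitely many right cosets. -/
theorem coset_bound (H : Subgroup (FreeGroup α)) (S : Set (FreeGroup α))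
    (hS : Subgroup.closure S = H) (L : ℕ) (hL : ∀ s ∈ S, s.toWord.length ≤ L)
    {h : FreeGroup α} (hh : h ∈ H) {p : List (α × Bool)} (hp : p <+: h.toWord) :
    ∃ h' ∈ H, ∃ r : List (α × Bool), r.length ≤ L ∧
      FreeGroup.mk p = h' * FreeGroup.mk r := by
  have hh' : h ∈ Submonoid.closure (S ∪ S⁻¹) := by
    rw [← Subgroup.closure_toSubmonoid]
    exact (by rw [hS]; exact hh : h ∈ (Subgroup.closure S).toSubmonoid)
  obtain ⟨l, hl, rfl⟩ := Submonoid.exists_list_of_mem_closure hh'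
  obtain ⟨t, r, ht, hr, he⟩ := exists_decomp l p hp
  have hmemH : ∀ x ∈ l, x ∈ H := by
    intro x hx
    rcases hl x hx with h | h
    · rw [← hS]; exact Subgroup.subset_closure h
    · rw [← hS]
      have := Subgroup.subset_closure h
      exact (Subgroup.inv_mem_iff _).mp (Subgroup.subset_closure h)
  refine ⟨t.prod, list_prod_mem (fun x hx => hmemH x (ht x hx)), r, ?_, he⟩
  rcases hr with rfl | ⟨g, hg, hpre⟩
  · simp
  · have hgL : g.toWord.length ≤ L := by
      rcases hl g hg with h | h
      · exact hL g h
      · have : g.toWord.length = (g⁻¹).toWord.length := by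
          rw [FreeGroup.toWord_inv, FreeGroup.invRev_length]
        rw [this]
        exact hL g⁻¹ h
    exact le_trans hpre.length_le hgL


/-- Every nontrivial element is conjugate to a cyclically reduced one. -/
theorem exists_cyclic :
    ∀ (n : ℕ) (h : FreeGroup α), h ≠ 1 → h.toWord.length ≤ n →
      ∃ u c : FreeGroup α, c ≠ 1 ∧
        (∀ a b, c.toWord.getLast? = some a → c.toWord.head? = some b →
          ¬(a.1 = b.1 ∧ a.2 = !b.2)) ∧ h = u * c * u⁻¹ := by
  intro n
  induction n with
  | zero =>
    intro h h1 hlen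
    exfalso
    exact h1 (FreeGroup.toWord_eq_nil_iff.mp (List.eq_nil_of_length_eq_zero (Nat.le_zero.mp hlen)))
  | succ n ih =>
    intro h h1 hlen
    have hWne : h.toWord ≠ [] := fun e => h1 (FreeGroup.toWord_eq_nil_iff.mp e)
    obtain ⟨a, hga⟩ : ∃ a, h.toWord.getLast? = some a := by
      rcases List.eq_nil_or_concat h.toWord with e | ⟨M, a, e⟩
      · exact absurd e hWne
      · exact ⟨a, by rw [e, List.concat_eq_append]; exact List.getLast?_concat⟩
    obtain ⟨b, W2, hWcons⟩ : ∃ b W2, h.toWord = b :: W2 := by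
      rcases hW : h.toWord with _ | ⟨b, W2⟩
      · exact absurd hW hWne
      · exact ⟨b, W2, rfl⟩
    by_cases hc : a.1 = b.1 ∧ a.2 = !b.2
    · -- cancellation at the two ends: peel off the first and last letters
      have hab : a = inv1 b := (cancel_iff a b).mp hc
      rcases List.eq_nil_or_concat W2 with rfl | ⟨M, a', hW2⟩
      · -- h.toWord = [b], so a = b, contradicting the cancellation
        exfalso
        rw [hWcons] at hga
        simp at hga
        rw [← hga] at hc
        simp at hc
      · rw [List.concat_eq_append] at hW2
        have ha' : a' = a := by
          rw [hWcons, hW2] at hga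
          rw [show b :: (M ++ [a']) = (b :: M) ++ [a'] from rfl, List.getLast?_concat] at hga
          injection hga with h''
          all_goals exact h''
        rw [ha'] at hW2
        have hsplit : h.toWord = b :: (M ++ [a]) := by rw [hWcons, hW2]
        have hmkW : h = FreeGroup.mk h.toWord := (FreeGroup.mk_toWord).symm
        have hfact : h = FreeGroup.mk [b] * FreeGroup.mk M * FreeGroup.mk [a] := by
          rw [FreeGroup.mul_mk, FreeGroup.mul_mk]
          conv_lhs => rw [hmkW, hsplit]
          congr 1
        have hainv : FreeGroup.mk [a] = (FreeGroup.mk [b])⁻¹ := by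
          rw [hab]; exact mk_inv1_eq_inv b
        have hne' : FreeGroup.mk M ≠ 1 := by
          intro e
          apply h1
          rw [hfact, e, mul_one, hainv, mul_inv_cancel]
        have hlen' : (FreeGroup.mk M).toWord.length ≤ n := by
          have hl1 : (FreeGroup.mk M).toWord.length ≤ M.length := by
            rw [FreeGroup.toWord_mk]
            exact (FreeGroup.Red.sublist FreeGroup.reduce.red).length_le
          have hl2 : h.toWord.length = M.length + 2 := by
            rw [hsplit]; simp
          omega
        obtain ⟨u', c, hc1, hcyc, he⟩ := ih (FreeGroup.mk M) hne' hlen'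
        refine ⟨FreeGroup.mk [b] * u', c, hc1, hcyc, ?_⟩
        rw [hfact, he, hainv]
        group
    · refine ⟨1, h, h1, ?_, by group⟩
      intro a' b' ha' hb'
      have h1' : a' = a := by
        rw [hga] at ha'
        injection ha' with h''
        exact h''.symm
      have h2' : b' = b := by
        rw [hWcons] at hb'
        simp only [List.head?_cons] at hb'
        injection hb' with h''
        exact h''.symm
      rw [h1', h2']
      exact hc

/-- Powers of a cyclically reduced word keep the same first and last letters. -/
theorem pow_head_getLast (c : FreeGroup α) (hc1 : c ≠ 1)
    (hcyc : ∀ a b, c.toWord.getLast? = some a → c.toWord.head? = some b →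
      ¬(a.1 = b.1 ∧ a.2 = !b.2)) :
    ∀ n : ℕ, 1 ≤ n →
      (c ^ n).toWord.head? = c.toWord.head? ∧
      (c ^ n).toWord.getLast? = c.toWord.getLast? := by
  intro n
  induction n with
  | zero => omega
  | succ n ih =>
    intro _
    rcases Nat.eq_zero_or_pos n with rfl | hn
    · simp
    have IH := ih hn
    have hcne : c.toWord ≠ [] := fun e => hc1 (FreeGroup.toWord_eq_nil_iff.mp e)
    have hcnne : (c ^ n).toWord ≠ [] := by
      intro e
      rw [e] at IH
      have := IH.1
      simp only [List.head?_nil] at this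
      rw [List.head?_eq_head hcne] at this
      exact Option.some_ne_none _ this.symm
    have hred : FreeGroup.reduce (c.toWord ++ (c ^ n).toWord) =
        c.toWord ++ (c ^ n).toWord := by
      apply reduce_append _ _ (FreeGroup.reduce_toWord c) (FreeGroup.reduce_toWord (c ^ n))
      intro a' b' ha' hb'
      rw [IH.1] at hb'
      exact hcyc a' b' ha' hb'
    have htw : (c ^ (n + 1)).toWord = c.toWord ++ (c ^ n).toWord := by
      have : c ^ (n + 1) = FreeGroup.mk (c.toWord ++ (c ^ n).toWord) := by
        rw [← FreeGroup.mul_mk, FreeGroup.mk_toWord, FreeGroup.mk_toWord, pow_succ']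
      rw [this, FreeGroup.toWord_mk, hred]
    constructor
    · rw [htw, List.head?_append_of_ne_nil _ hcne]
    · rw [htw, List.getLast?_append_of_ne_nil _ hcnne, IH.2]


/-- From almost normality: some positive power of each conjugate of an element
of `H` lies in `H`. -/
theorem conj_pow_mem {G : Type*} [Group G] {H : Subgroup G} (han : AlmostNormal H)
    {h : G} (hh : h ∈ H) (g : G) : ∃ n : ℕ, 0 < n ∧ g * h ^ n * g⁻¹ ∈ H := by
  set K := Subgroup.map (MulAut.conj g).toMonoidHom H with hK
  have hx : g * h * g⁻¹ ∈ K := by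
    rw [hK]
    exact ⟨h, hh, by simp⟩
  obtain ⟨n, hn, _, hmem⟩ :=
    Subgroup.exists_pow_mem_of_relIndex_ne_zero (han g).2 hx
  refine ⟨n, hn, ?_⟩
  rw [conj_pow, Subgroup.mem_inf, Subgroup.mem_inf] at hmem
  exact hmem.1.1


-- k = 0 case
theorem main_k0 (H : Subgroup (FreeGroup (Fin 0))) (hnontriv : H ≠ ⊥) : H.index ≠ 0 := by
  exfalso
  apply hnontriv
  rw [Subgroup.eq_bot_iff_forall]
  intro x _
  rw [← FreeGroup.mk_toWord (x := x)]
  rcases hx : x.toWord with _ | ⟨a, l⟩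
  · rw [← FreeGroup.one_eq_mk]
  · exact a.1.elim0


-- k = 1 case
theorem main_k1 (H : Subgroup (FreeGroup (Fin 1))) (hnontriv : H ≠ ⊥) : H.index ≠ 0 := by
  have hall : ∀ g : FreeGroup (Fin 1), ∃ m : ℤ, g = (FreeGroup.of 0) ^ m := by
    intro g
    induction g using FreeGroup.induction_on with
    | C1 => exact ⟨0, by simp⟩
    | of a => exact ⟨1, by rw [Subsingleton.elim a 0]; simp⟩
    | inv_of a ih =>
      obtain ⟨m, hm⟩ := ih
      exact ⟨-m, by rw [hm, zpow_neg]⟩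
    | mul x y ihx ihy =>
      obtain ⟨m, hm⟩ := ihx
      obtain ⟨m', hm'⟩ := ihy
      exact ⟨m + m', by rw [hm, hm', zpow_add]⟩
  obtain ⟨h0, hh0, hne0⟩ := (Subgroup.bot_or_exists_ne_one H).resolve_left hnontriv
  obtain ⟨m, hm⟩ := hall h0
  have hm0 : m ≠ 0 := fun e => hne0 (by rw [hm, e, zpow_zero])
  obtain ⟨d, hd0, hdH⟩ : ∃ d : ℤ, 0 < d ∧ (FreeGroup.of 0) ^ d ∈ H := by
    refine ⟨(m.natAbs : ℤ), by exact_mod_cast Int.natAbs_pos.mpr hm0, ?_⟩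
    rcases Int.natAbs_eq m with he | he
    · rw [← he, ← hm]; exact hh0
    · have h3 : (FreeGroup.of (0 : Fin 1)) ^ (m.natAbs : ℤ) = ((FreeGroup.of 0) ^ m)⁻¹ := by
        conv_rhs => rw [he]
        rw [zpow_neg, inv_inv]
      rw [h3, ← hm]
      exact inv_mem hh0
  have key : ∀ w : FreeGroup (Fin 1), ∃ j : ℤ, j ∈ Set.Ico (0 : ℤ) d ∧
      w * ((FreeGroup.of 0) ^ j)⁻¹ ∈ H := by
    intro w
    obtain ⟨jj, rfl⟩ := hall w
    refine ⟨jj % d, ⟨Int.emod_nonneg jj (by omega), Int.emod_lt_of_pos jj hd0⟩, ?_⟩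
    have h1 : (FreeGroup.of 0 : FreeGroup (Fin 1)) ^ jj * ((FreeGroup.of 0) ^ (jj % d))⁻¹ =
        ((FreeGroup.of 0) ^ d) ^ (jj / d) := by
      rw [← zpow_mul, ← zpow_sub]
      congr 1
      have := Int.mul_ediv_add_emod jj d
      omega
    rw [h1]
    exact zpow_mem hdH _
  have hfin : Finite (Quotient (QuotientGroup.rightRel H)) := by
    rw [← Set.finite_univ_iff]
    apply Set.Finite.subset ((Set.finite_Ico (0:ℤ) d).image
      (fun j => Quotient.mk (QuotientGroup.rightRel H) ((FreeGroup.of 0) ^ j)))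
    rintro q -
    induction q using Quotient.inductionOn with
    | h w =>
      obtain ⟨j, hj1, hj2⟩ := key w
      refine ⟨j, hj1, ?_⟩
      exact Quotient.sound ((QuotientGroup.rightRel_apply).mpr hj2)
  have : Finite (FreeGroup (Fin 1) ⧸ H) :=
    Finite.of_equiv _ (QuotientGroup.quotientRightRelEquivQuotientLeftRel H)
  exact Subgroup.index_ne_zero_of_finite

theorem main_ge2 (k : ℕ) (hk : 2 ≤ k) (H : Subgroup (FreeGroup (Fin k)))
    (hfg : Group.FG H) (hnontriv : H ≠ ⊥) (han : AlmostNormal H) : H.index ≠ 0 := by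
  classical
  obtain ⟨S, hSc, hSf⟩ := (Subgroup.fg_iff H).mp ((Group.fg_iff_subgroup_fg H).mp hfg)
  set L := hSf.toFinset.sup (fun s => s.toWord.length) with hLdef
  have hLb : ∀ s ∈ S, s.toWord.length ≤ L := fun s hs =>
    Finset.le_sup (f := fun s => s.toWord.length) (hSf.mem_toFinset.mpr hs)
  obtain ⟨h0, hh0, hne0⟩ := (Subgroup.bot_or_exists_ne_one H).resolve_left hnontriv
  obtain ⟨u, c, hc1, hcyc, hconj⟩ := exists_cyclic (h0.toWord.length) h0 hne0 le_rfl
  have hcne : c.toWord ≠ [] := fun e => hc1 (FreeGroup.toWord_eq_nil_iff.mp e)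
  obtain ⟨cb, hcb⟩ : ∃ cb, c.toWord.head? = some cb := ⟨_, List.head?_eq_head hcne⟩
  obtain ⟨ca, hca⟩ : ∃ ca, c.toWord.getLast? = some ca :=
    ⟨_, List.getLast?_eq_getLast hcne⟩
  -- every right coset of H has a representative of length at most L + 1
  have key : ∀ w : FreeGroup (Fin k), ∃ s : List (Fin k × Bool),
      s.length ≤ L + 1 ∧ w * (FreeGroup.mk s)⁻¹ ∈ H := by
    intro w
    -- choose a letter y avoiding three bad values
    obtain ⟨y, hy1, hy2, hy3⟩ : ∃ y : Fin k × Bool,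
        (∀ a, w.toWord.getLast? = some a → y ≠ inv1 a) ∧ y ≠ inv1 cb ∧ y ≠ ca := by
      set e0 : Fin k × Bool := inv1 ((w.toWord.getLast?).getD ca) with he0
      have : ∃ y : Fin k × Bool, y ∉ ({e0, inv1 cb, ca} : Finset (Fin k × Bool)) := by
        by_contra hcon
        push_neg at hcon
        have hss : (Finset.univ : Finset (Fin k × Bool)) ⊆ {e0, inv1 cb, ca} :=
          fun y _ => hcon y
        have h1 := Finset.card_le_card hss
        have h2 : ({e0, inv1 cb, ca} : Finset (Fin k × Bool)).card ≤ 3 :=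
          le_trans (Finset.card_insert_le _ _) (by
            have := Finset.card_insert_le (inv1 cb) ({ca} : Finset (Fin k × Bool))
            simp at this ⊢
            omega)
        rw [Finset.card_univ] at h1
        simp only [Fintype.card_prod, Fintype.card_fin, Fintype.card_bool] at h1
        omega
      obtain ⟨y, hy⟩ := this
      simp only [Finset.mem_insert, Finset.mem_singleton, not_or] at hy
      refine ⟨y, ?_, hy.2.1, hy.2.2⟩
      intro a hla hya
      apply hy.1
      rw [he0, hla]
      simpa using hya
    -- v = w·y has reduced word w.toWord ++ [y]
    have hvW : (w * FreeGroup.mk [y]).toWord = w.toWord ++ [y] := by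
      have hv : w * FreeGroup.mk [y] = FreeGroup.mk (w.toWord ++ [y]) := by
        rw [← FreeGroup.mul_mk, FreeGroup.mk_toWord]
      rw [hv, FreeGroup.toWord_mk]
      apply reduce_append _ _ (FreeGroup.reduce_toWord w) (FreeGroup.reduce_singleton y)
      intro a b' ha hb'
      simp only [List.head?_cons] at hb'
      injection hb' with hb''
      rw [← hb'']
      intro hcanc
      exact hy1 a ha ((cancel_iff y a).mp (by exact ⟨hcanc.1.symm, by simp [hcanc.2]⟩))
    set v := w * FreeGroup.mk [y] with hvdef
    -- almost normality gives a positive power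
    obtain ⟨n, hn, hmem⟩ := conj_pow_mem han hh0 (v * u⁻¹)
    have hvcv : v * c ^ n * v⁻¹ ∈ H := by
      have he : v * c ^ n * v⁻¹ = (v * u⁻¹) * h0 ^ n * (v * u⁻¹)⁻¹ := by
        rw [hconj, conj_pow]
        group
      rw [he]
      exact hmem
    -- the reduced word of v * c^n * v⁻¹ starts with v.toWord
    have hWn := pow_head_getLast c hc1 hcyc n hn
    have hWnne : (c ^ n).toWord ≠ [] := by
      intro e
      rw [e] at hWn
      rw [hcb] at hWn
      exact absurd hWn.1 (by simp)
    have hvne : v.toWord ≠ [] := by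
      rw [hvW]
      simp
    have hlastv : v.toWord.getLast? = some y := by
      rw [hvW]
      rw [show w.toWord ++ [y] = (w.toWord).concat y from by simp, List.concat_eq_append]
      exact List.getLast?_concat
    have hheadinv : (FreeGroup.invRev v.toWord).head? = some (inv1 y) := by
      unfold FreeGroup.invRev
      rw [List.head?_reverse, List.getLast?_map]
      rw [hlastv]
      rfl
    have hredB : FreeGroup.reduce ((c ^ n).toWord ++ FreeGroup.invRev v.toWord) =
        (c ^ n).toWord ++ FreeGroup.invRev v.toWord := by
      apply reduce_append _ _ (FreeGroup.reduce_toWord _)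
      · rw [FreeGroup.reduce_invRev, FreeGroup.reduce_toWord]
      · intro a b' ha hb'
        rw [hWn.2, hca] at ha
        injection ha with ha'
        rw [hheadinv] at hb'
        injection hb' with hb''
        rw [← ha', ← hb'']
        intro hcanc
        have : ca = inv1 (inv1 y) := (cancel_iff _ _).mp hcanc
        rw [inv1_inv1] at this
        exact hy3 this.symm
    have hredT : FreeGroup.reduce (v.toWord ++ ((c ^ n).toWord ++ FreeGroup.invRev v.toWord)) =
        v.toWord ++ ((c ^ n).toWord ++ FreeGroup.invRev v.toWord) := by
      apply reduce_append _ _ (FreeGroup.reduce_toWord _) hredB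
      intro a b' ha hb'
      rw [hlastv] at ha
      injection ha with ha'
      rw [List.head?_append_of_ne_nil _ hWnne, hWn.1, hcb] at hb'
      injection hb' with hb''
      rw [← ha', ← hb'']
      intro hcanc
      exact hy2 ((cancel_iff _ _).mp hcanc)
    have hT : (v * c ^ n * v⁻¹).toWord =
        v.toWord ++ ((c ^ n).toWord ++ FreeGroup.invRev v.toWord) := by
      have : v * c ^ n * v⁻¹ =
          FreeGroup.mk (v.toWord ++ ((c ^ n).toWord ++ FreeGroup.invRev v.toWord)) := by
        rw [← FreeGroup.mul_mk, ← FreeGroup.mul_mk, FreeGroup.mk_toWord, FreeGroup.mk_toWord,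
          ← FreeGroup.toWord_inv, FreeGroup.mk_toWord, mul_assoc]
      rw [this, FreeGroup.toWord_mk, hredT]
    have hpre : v.toWord <+: (v * c ^ n * v⁻¹).toWord := by
      rw [hT]
      exact List.prefix_append _ _
    obtain ⟨h', hh', r, hrL, hre⟩ := coset_bound H S hSc L hLb hvcv hpre
    refine ⟨r ++ [inv1 y], by simp; omega, ?_⟩
    have hveq : v = h' * FreeGroup.mk r := by
      rw [← hre, FreeGroup.mk_toWord]
    -- compute: w * (mk (r ++ [inv1 y]))⁻¹ = h'
    have hfinal : w * (FreeGroup.mk (r ++ [inv1 y]))⁻¹ = h' := by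
      have h4 : FreeGroup.mk (r ++ [inv1 y]) = FreeGroup.mk r * (FreeGroup.mk [y])⁻¹ := by
        rw [← mk_inv1_eq_inv, FreeGroup.mul_mk]
      have h5 : w = v * (FreeGroup.mk [y])⁻¹ := by
        rw [hvdef, mul_assoc, mul_inv_cancel, mul_one]
      rw [h5, hveq, h4]
      group
    rw [hfinal]
    exact hh'
  -- conclude: finitely many right cosets
  have hfin : Finite (Quotient (QuotientGroup.rightRel H)) := by
    rw [← Set.finite_univ_iff]
    apply Set.Finite.subset (((List.finite_length_le (Fin k × Bool) (L + 1)).image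
      (fun s => Quotient.mk (QuotientGroup.rightRel H) (FreeGroup.mk s))))
    rintro q -
    induction q using Quotient.inductionOn with
    | h w =>
      obtain ⟨s, hs1, hs2⟩ := key w
      exact ⟨s, hs1, Quotient.sound ((QuotientGroup.rightRel_apply).mpr hs2)⟩
  have : Finite (FreeGroup (Fin k) ⧸ H) :=
    Finite.of_equiv _ (QuotientGroup.quotientRightRelEquivQuotientLeftRel H)
  exact Subgroup.index_ne_zero_of_finite


end ANAux

/-- A finitely generated nontrivial almost normal subgroup of a finitely generated
free group has finite index. -/
theorem finiteIndex_of_almostNormal_freeGroup (k : ℕ)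
    (H : Subgroup (FreeGroup (Fin k)))
    (hfg : Group.FG H) (hnontriv : H ≠ ⊥) (han : AlmostNormal H) :
    H.index ≠ 0 := by
  rcases Nat.lt_or_ge k 2 with hk | hk
  · interval_cases k
    · exact ANAux.main_k0 H hnontriv
    · exact ANAux.main_k1 H hnontriv
  · exact ANAux.main_ge2 k hk H hfg hnontriv han
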